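/- If a cascaded sensor selection instance satisfies strong dominance, then for all indices i ≤ j the marginal error equals the disagreement probability: γ_i − γ_j = P(Y^i ≠ Y^j). -/

import Mathlib

open MeasureTheory

/-- Error probability `γ_k = P(Y^k ≠ Y)` of sensor `k`. -/
noncomputable def gam {Ω : Type} [MeasurableSpace Ω] (μ : Measure Ω) {K : ℕ}
    (Y : Ω → Bool) (S : Fin K → Ω → Bool) (k : Fin K) : ℝ :=
  (μ {ω | S k ω ≠ Y ω}).toReal

/-- Disagreement probability `P(Y^i ≠ Y^j)` between sensors `i` and `j`. -/
noncomputable def dis {Ω : Type} [MeasurableSpace Ω] (μ : Measure Ω) {K : ℕ}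
    (S : Fin K → Ω → Bool) (i j : Fin K) : ℝ :=
  (μ {ω | S i ω ≠ S j ω}).toReal

/-- Cumulative cost `C_k = c_1 + ⋯ + c_k`. -/
noncomputable def cumCost {K : ℕ} (c : Fin K → ℝ) (k : Fin K) : ℝ :=
  ∑ i ∈ Finset.univ.filter (fun i : Fin K => i ≤ k), c i

/-- Under strong dominance, for all `i ≤ j` the marginal error equals
the disagreement probability: `γ_i − γ_j = P(Y^i ≠ Y^j)`. -/
theorem strong_dominance_gamma_diff_eq_disagreement
    {Ω : Type} [MeasurableSpace Ω] (μ : Measure Ω) [IsProbabilityMeasure μ]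
    {K : ℕ} (Y : Ω → Bool) (S : Fin K → Ω → Bool)
    (hY : Measurable Y) (hS : ∀ k, Measurable (S k))
    (c : Fin K → ℝ) (hc : ∀ k, 0 ≤ c k)
    (hmono : ∀ i j : Fin K, i ≤ j → gam μ Y S j ≤ gam μ Y S i)
    (hSD : ∀ i j : Fin K, i ≤ j → ∀ᵐ ω ∂μ, S i ω = Y ω → S j ω = Y ω) :
    ∀ i j : Fin K, i ≤ j → gam μ Y S i - gam μ Y S j = dis μ S i j := by
  intro i j hij
  have hae := hSD i j hij
  set A := {ω | S i ω ≠ Y ω} with hAdef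
  set B := {ω | S j ω ≠ Y ω} with hBdef
  set D := {ω | S i ω ≠ S j ω} with hDdef
  have hBmeas : NullMeasurableSet B μ := by
    refine (MeasurableSet.nullMeasurableSet ?_)
    exact ((measurableSet_eq_fun (hS j) hY)).compl
  have hA_eq : A =ᵐ[μ] ((D ∪ B : Set Ω)) := by
    rw [Filter.eventuallyEq_set]
    filter_upwards [hae] with ω hω
    simp only [hAdef, hBdef, hDdef, Set.mem_union, Set.mem_setOf_eq]
    constructor
    · intro h
      by_cases hb : S j ω = Y ω
      · left; intro he; exact h (he.trans hb)
      · right; exact hb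
    · rintro (h | h)
      · intro he; exact h (he.trans (hω he).symm)
      · exact fun he => h (hω he)
  have hdisj : MeasureTheory.AEDisjoint μ D B := by
    have hsub : D ∩ B ⊆ {ω | ¬ (S i ω = Y ω → S j ω = Y ω)} := by
      rintro ω ⟨hD, hB⟩
      simp only [hDdef, hBdef, Set.mem_setOf_eq] at *
      intro himp
      cases h1 : S i ω <;> cases h2 : S j ω <;> cases h3 : Y ω <;> simp_all
    have h0 := hae
    rw [ae_iff] at h0
    exact measure_mono_null hsub h0
  have hsum : μ A = μ D + μ B := by
    rw [measure_congr hA_eq, measure_union₀ hBmeas hdisj]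
  have hDfin : μ D ≠ ⊤ := measure_ne_top μ D
  have hBfin : μ B ≠ ⊤ := measure_ne_top μ B
  simp only [gam, dis]
  rw [show ({ω | S i ω ≠ Y ω}) = A from rfl, show ({ω | S j ω ≠ Y ω}) = B from rfl,
    show ({ω | S i ω ≠ S j ω}) = D from rfl, hsum, ENNReal.toReal_add hDfin hBfin]
  ring
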